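/- Let k ≥ 2, and let n, p be positive integers. Every shuffle-preserved 2-coloring of every complete n×n×⋯×n k-partite multigraph contains a monochromatic complete p×p×⋯×p k-partite subgraph if and only if 2(p−1) < n. -/
import Mathlib

private lemma pair_mem' {α : Type} {s : Finset α} (h2 : s.card ≤ 2) {a b c : α}
    (ha : a ∈ s) (hb : b ∈ s) (hab : a ≠ b) (hc : c ∈ s) : c = a ∨ c = b := by
  haveI := Classical.decEq α
  have hsub : ({a, b} : Finset α) ⊆ s := by
    intro x hx
    simp only [Finset.mem_insert, Finset.mem_singleton] at hx
    rcases hx with rfl | rfl <;> assumption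
  have heq := Finset.eq_of_subset_of_card_le hsub
    (by rw [Finset.card_pair hab]; exact h2)
  rw [← heq] at hc
  simpa using hc

/-- Tightness for k-partite graphs: every shuffle-preserved 2-coloring of
every complete n×⋯×n k-partite multigraph has a monochromatic complete
p×⋯×p k-partite subgraph iff 2(p-1) < n. -/
theorem ramsey_kpartite_iff (k n p : ℕ) (hk : 2 ≤ k) (hn : 0 < n) (hp : 0 < p) :
    (∀ (C : Type) (η : (Fin k × Fin n) → (Fin k × Fin n) → Set C),
      (∀ u v, η u v = η v u) →
      (∀ u v, u.1 ≠ v.1 → (η u v).Nonempty) →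
      (∃ s : Finset C, s.card ≤ 2 ∧ ∀ u v c, c ∈ η u v → c ∈ s) →
      (∀ (c : C) u v, (∃ w, w.1 ≠ u.1 ∧ c ∈ η u w) →
        (∃ w, w.1 ≠ v.1 ∧ c ∈ η v w) → u.1 ≠ v.1 → c ∈ η u v) →
      ∃ (c : C) (A : Fin k → Finset (Fin n)),
        (∀ i, (A i).card = p) ∧
        ∀ i j, i ≠ j → ∀ a ∈ A i, ∀ b ∈ A j, c ∈ η (i, a) (j, b))
    ↔ 2 * (p - 1) < n := by
  classical
  constructor
  · -- forward: contrapositive, build a counterexample coloring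
    intro H
    by_contra hlt
    push_neg at hlt  -- n ≤ 2 * (p - 1)
    -- membership predicate: part 0 is split, other parts are in both colors
    set memS : Bool → (Fin k × Fin n) → Prop :=
      fun c u => (u.1 : ℕ) = 0 → (c = true ↔ (u.2 : ℕ) < p - 1) with hmemS
    set η : (Fin k × Fin n) → (Fin k × Fin n) → Set Bool :=
      fun u v => {c | memS c u ∧ memS c v} with hη
    obtain ⟨c, A, hcard, hedge⟩ := H Bool η
      (by intro u v; ext c; exact and_comm)
      (by
        intro u v huv
        by_cases hu : (u.1 : ℕ) = 0
        · have hv : (v.1 : ℕ) ≠ 0 := by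
            intro hv; exact huv (Fin.ext (hu.trans hv.symm))
          by_cases h2 : (u.2 : ℕ) < p - 1
          · exact ⟨true, fun _ => iff_of_true rfl h2, fun h => absurd h hv⟩
          · exact ⟨false, fun _ => iff_of_false Bool.false_ne_true h2,
              fun h => absurd h hv⟩
        · by_cases hv : (v.1 : ℕ) = 0
          · by_cases h2 : (v.2 : ℕ) < p - 1
            · exact ⟨true, fun h => absurd h hu, fun _ => iff_of_true rfl h2⟩
            · exact ⟨false, fun h => absurd h hu,
                fun _ => iff_of_false Bool.false_ne_true h2⟩
          · exact ⟨true, fun h => absurd h hu, fun h => absurd h hv⟩)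
      (⟨Finset.univ, by simp, fun _ _ _ _ => Finset.mem_univ _⟩)
      (by
        rintro c u v ⟨w, hw, hcw⟩ ⟨w', hw', hcw'⟩ huv
        exact ⟨hcw.1, hcw'.1⟩)
    set i0 : Fin k := ⟨0, by omega⟩ with hi0
    set i1 : Fin k := ⟨1, by omega⟩ with hi1
    have hi01 : i0 ≠ i1 := by
      intro h
      have := congrArg Fin.val h
      simp [hi0, hi1] at this
    have hA1 : (A i1).Nonempty := by
      rw [← Finset.card_pos, hcard i1]; exact hp
    obtain ⟨b, hb⟩ := hA1
    have key : ∀ a ∈ A i0, (c = true ↔ (a : ℕ) < p - 1) := by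
      intro a ha
      have := (hedge i0 i1 hi01 a ha b hb).1
      exact this rfl
    cases c with
    | true =>
        have hsub : ∀ a ∈ A i0, (a : ℕ) ∈ Finset.range (p - 1) := by
          intro a ha
          simpa using ((key a ha).mp rfl)
        have hle := Finset.card_le_card_of_injOn (fun a : Fin n => (a : ℕ))
          hsub (fun x _ y _ h => Fin.ext h)
        rw [hcard i0, Finset.card_range] at hle
        omega
    | false =>
        have hsub : ∀ a ∈ A i0, (a : ℕ) - (p - 1) ∈ Finset.range (n - (p - 1)) := by
          intro a ha
          have h1 : ¬ ((a : ℕ) < p - 1) := fun h => by simpa using (key a ha).mpr h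
          have h2 : (a : ℕ) < n := a.isLt
          simp only [Finset.mem_range]
          omega
        have hle := Finset.card_le_card_of_injOn (fun a : Fin n => (a : ℕ) - (p - 1))
          hsub (by
            intro x hx y hy h
            have h' : (x : ℕ) - (p - 1) = (y : ℕ) - (p - 1) := h
            have h1 : ¬ ((x : ℕ) < p - 1) := fun hh => by simpa using (key x hx).mpr hh
            have h2 : ¬ ((y : ℕ) < p - 1) := fun hh => by simpa using (key y hy).mpr hh
            exact Fin.ext (by omega))
        rw [hcard i0, Finset.card_range] at hle
        omega
  · -- backward
    intro hlt C η hsym hne hs hshuf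
    obtain ⟨s, hs2, hsub⟩ := hs
    have hpn : p ≤ n := by omega
    set i0 : Fin k := ⟨0, by omega⟩ with hi0
    set i1 : Fin k := ⟨1, by omega⟩ with hi1
    have hi01 : i0 ≠ i1 := by
      intro h
      have := congrArg Fin.val h
      simp [hi0, hi1] at this
    set a0 : Fin n := ⟨0, hn⟩ with ha0
    set S : C → (Fin k × Fin n) → Prop :=
      fun c u => ∃ w, w.1 ≠ u.1 ∧ c ∈ η u w with hS
    set F : C → Fin k → Finset (Fin n) :=
      fun c i => Finset.univ.filter (fun a => S c (i, a)) with hF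
    have hother : ∀ i : Fin k, ∃ j : Fin k, j ≠ i := by
      intro i
      by_cases h : i = i0
      · exact ⟨i1, by rw [h]; exact hi01.symm⟩
      · exact ⟨i0, fun hh => h hh.symm⟩
    have hcover : ∀ u : Fin k × Fin n, ∃ c, c ∈ s ∧ S c u := by
      intro u
      obtain ⟨j, hj⟩ := hother u.1
      obtain ⟨c, hc⟩ := hne u (j, a0) (fun h => hj h.symm)
      exact ⟨c, hsub u (j, a0) c hc, ⟨(j, a0), hj, hc⟩⟩
    -- a fixed color
    obtain ⟨c1, hc1mem⟩ := hne (i0, a0) (i1, a0) (by simpa using hi01)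
    have hc1s : c1 ∈ s := hsub _ _ _ hc1mem
    have main : ∃ c, ∀ i, p ≤ (F c i).card := by
      by_cases hcase : ∀ i, p ≤ (F c1 i).card
      · exact ⟨c1, hcase⟩
      push_neg at hcase
      obtain ⟨i, hi⟩ := hcase
      have hex : ∃ a : Fin n, ¬ S c1 (i, a) := by
        by_contra hall
        push_neg at hall
        have hFu : F c1 i = Finset.univ := by
          ext a; simp [hF, hall a]
        rw [hFu, Finset.card_univ, Fintype.card_fin] at hi
        omega
      obtain ⟨a, hau⟩ := hex
      obtain ⟨j0, hj0⟩ := hother i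
      obtain ⟨c2, hc2mem⟩ := hne (i, a) (j0, a0) (fun h => hj0 h.symm)
      have hc2s : c2 ∈ s := hsub _ _ _ hc2mem
      have hc2ne : c2 ≠ c1 := by
        rintro rfl
        exact hau ⟨(j0, a0), hj0, hc2mem⟩
      have hu_only : ∀ v : Fin k × Fin n, v.1 ≠ i → ∀ c, c ∈ η (i, a) v → c = c2 := by
        intro v hv c hc
        have hcs : c ∈ s := hsub _ _ _ hc
        have hne1 : c ≠ c1 := by
          rintro rfl
          exact hau ⟨v, hv, hc⟩
        rcases pair_mem' hs2 hc2s hc1s hc2ne hcs with h | h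
        · exact h
        · exact absurd h hne1
      refine ⟨c2, fun j => ?_⟩
      by_cases hji : j = i
      · subst hji
        have hunion : ∀ b : Fin n, S c1 (j, b) ∨ S c2 (j, b) := by
          intro b
          obtain ⟨c, hcs, hSc⟩ := hcover (j, b)
          rcases pair_mem' hs2 hc2s hc1s hc2ne hcs with rfl | rfl
          · right; exact hSc
          · left; exact hSc
        have hsubU : (Finset.univ : Finset (Fin n)) ⊆ F c1 j ∪ F c2 j := by
          intro b _
          rcases hunion b with h | h
          · exact Finset.mem_union_left _ (by simp [hF, h])
          · exact Finset.mem_union_right _ (by simp [hF, h])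
        have hcardU := Finset.card_le_card hsubU
        have hle := Finset.card_union_le (F c1 j) (F c2 j)
        rw [Finset.card_univ, Fintype.card_fin] at hcardU
        omega
      · have hFu : F c2 j = Finset.univ := by
          ext b
          simp only [hF, Finset.mem_filter, Finset.mem_univ, true_and]
          have hij' : ((i, a) : Fin k × Fin n).1 ≠ ((j, b) : Fin k × Fin n).1 :=
            fun h => hji (h.symm)
          obtain ⟨c, hc⟩ := hne _ _ hij'
          have hcc : c = c2 := hu_only (j, b) hji c hc
          subst hcc
          show S c (j, b) ↔ True
          rw [iff_true]
          refine ⟨(i, a), fun h => hji h.symm, ?_⟩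
          rw [hsym]
          exact hc
        rw [hFu, Finset.card_univ, Fintype.card_fin]
        exact hpn
    obtain ⟨c, hc⟩ := main
    choose A hAsub hAcard using fun i => Finset.exists_subset_card_eq (hc i)
    refine ⟨c, A, hAcard, ?_⟩
    intro i j hij a ha b hb
    have hSa : S c (i, a) := by
      have := hAsub i ha
      simpa [hF] using this
    have hSb : S c (j, b) := by
      have := hAsub j hb
      simpa [hF] using this
    exact hshuf c (i, a) (j, b) hSa hSb (by simpa using hij)
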